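/- Optimality of cached distances: if dist : V → ℝ satisfies the Dijkstra invariants for source s in a weighted graph with positive edge weights — namely dist(s) = 0, dist(v) is the weight of some walk from s to v for each reachable v, and dist(v) ≤ dist(u) + w(u, v) for every edge (u, v) with both endpoints reachable — then dist(v) = SD(s, v) for every reachable v, where SD is the shortest-path distance. -/

import Mathlib

/-- Weight of a walk given as the list of its vertices. -/
def walkWeight {V : Type*} (w : V → V → ℝ) : List V → ℝ
  | [] => 0
  | [_] => 0
  | a :: b :: rest => w a b + walkWeight w (b :: rest)

/-- The set of weights of walks from `s` to `t` in the graph with adjacency `Adj`. -/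
def walkWeights {V : Type*} (Adj : V → V → Prop) (w : V → V → ℝ) (s t : V) : Set ℝ :=
  {x | ∃ l : List V, List.Chain' Adj (s :: l) ∧
        (s :: l).getLast (List.cons_ne_nil s l) = t ∧ walkWeight w (s :: l) = x}

/-- Shortest-path distance: infimum of weights of walks from `s` to `t`. -/
noncomputable def netDist {V : Type*} (Adj : V → V → Prop) (w : V → V → ℝ) (s t : V) : ℝ :=
  sInf (walkWeights Adj w s t)

lemma walkWeight_append {V : Type*} (w : V → V → ℝ) :
    ∀ (xs : List V) (h : xs ≠ []) (v : V),
      walkWeight w (xs ++ [v]) = walkWeight w xs + w (xs.getLast h) v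
  | [], h, v => absurd rfl h
  | [a], _, v => by simp [walkWeight]
  | a :: b :: rest, _, v => by
      have := walkWeight_append w (b :: rest) (List.cons_ne_nil b rest) v
      simp only [List.cons_append, walkWeight, List.append_eq] at this ⊢
      rw [this, List.getLast_cons (List.cons_ne_nil b rest)]; ring

lemma dist_le_walkWeight {V : Type*} (Adj : V → V → Prop) (w : V → V → ℝ) (s : V)
    (dist : V → ℝ) (hs : dist s = 0)
    (hrelax : ∀ u v : V, Adj u v →
      (walkWeights Adj w s u).Nonempty → (walkWeights Adj w s v).Nonempty →
      dist v ≤ dist u + w u v) :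
    ∀ l : List V, List.Chain' Adj (s :: l) →
      dist ((s :: l).getLast (List.cons_ne_nil s l)) ≤ walkWeight w (s :: l) := by
  intro l
  induction l using List.reverseRecOn with
  | nil => intro _; simp [walkWeight, hs]
  | append_singleton l' v ih =>
    intro hchain
    have hchain' : List.Chain' Adj ((s :: l') ++ [v]) := by simpa using hchain
    rw [List.Chain', List.isChain_append] at hchain'
    obtain ⟨h1, _, h3⟩ := hchain'
    have hadj : Adj ((s :: l').getLast (List.cons_ne_nil s l')) v := by
      apply h3
      · rw [List.getLast?_eq_getLast (List.cons_ne_nil s l')]; rfl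
      · simp
    set u := (s :: l').getLast (List.cons_ne_nil s l') with hu
    have hne_u : (walkWeights Adj w s u).Nonempty :=
      ⟨walkWeight w (s :: l'), l', h1, rfl, rfl⟩
    have hlast : (s :: (l' ++ [v])).getLast (List.cons_ne_nil _ _) = v := by
      simp
    have hne_v : (walkWeights Adj w s v).Nonempty :=
      ⟨walkWeight w (s :: (l' ++ [v])), l' ++ [v], hchain, hlast, rfl⟩
    have h4 := hrelax u v hadj hne_u hne_v
    have h5 := ih h1
    rw [hlast]
    have heq : walkWeight w (s :: (l' ++ [v])) = walkWeight w (s :: l') + w u v :=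
      walkWeight_append w (s :: l') (List.cons_ne_nil s l') v
    rw [heq]
    linarith

/-- optimality of cached distances. If `dist` satisfies the Dijkstra
invariants for source `s`, then `dist v` equals the shortest-path distance for every
reachable `v`. -/
theorem stmt_8 {V : Type*} [Fintype V] (Adj : V → V → Prop) (w : V → V → ℝ) (s : V)
    (hpos : ∀ a b : V, Adj a b → 0 < w a b)
    (dist : V → ℝ)
    (hs : dist s = 0)
    (hwalk : ∀ v : V, (walkWeights Adj w s v).Nonempty → dist v ∈ walkWeights Adj w s v)
    (hrelax : ∀ u v : V, Adj u v →
      (walkWeights Adj w s u).Nonempty → (walkWeights Adj w s v).Nonempty →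
      dist v ≤ dist u + w u v) :
    ∀ v : V, (walkWeights Adj w s v).Nonempty → dist v = netDist Adj w s v := by
  intro v hne
  have hlb : ∀ x ∈ walkWeights Adj w s v, dist v ≤ x := by
    rintro x ⟨l, hchain, hlast, hwt⟩
    have := dist_le_walkWeight Adj w s dist hs hrelax l hchain
    rw [hlast, hwt] at this
    exact this
  have hmem := hwalk v hne
  exact le_antisymm (le_csInf hne hlb) (csInf_le ⟨dist v, hlb⟩ hmem)
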